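/- Let V be a finite-dimensional real vector space and U : V^3 → ℝ a trilinear map satisfying ξ_{1/2}·U = U, where ξ_{1/2} = (1/3)(id + (1/2)(2 3) + (1/2)(1 2) − (1/2)(1 2 3) − (1/2)(1 3 2) − (1 3)). Then y_t*(U⊗w) = 0 for every linear functional w on V. -/

import Mathlib

/-- Action of a group ring element `a ∈ ℝ[S_r]` on an `r`-multilinear map:
`(aT)(v₁,…,v_r) = Σ_p a(p)·T(v_{p(1)},…,v_{p(r)})`. -/
noncomputable def gact {V : Type} [AddCommGroup V] [Module ℝ V] {r : ℕ}
    (a : MonoidAlgebra ℝ (Equiv.Perm (Fin r)))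
    (T : MultilinearMap ℝ (fun _ : Fin r => V) ℝ) :
    MultilinearMap ℝ (fun _ : Fin r => V) ℝ :=
  ∑ p : Equiv.Perm (Fin r), a.coeff p • T.domDomCongr p
/-- Pointwise action of a group ring element `a ∈ ℝ[S_r]` on a function
`T : V^r → ℝ`: `(aT)(v₁,…,v_r) = Σ_p a(p)·T(v_{p(1)},…,v_{p(r)})`. -/
noncomputable def fact {V : Type} [AddCommGroup V] [Module ℝ V] {r : ℕ}
    (a : MonoidAlgebra ℝ (Equiv.Perm (Fin r)))
    (T : (Fin r → V) → ℝ) : (Fin r → V) → ℝ :=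
  fun v => ∑ p : Equiv.Perm (Fin r), a.coeff p * T (fun i => v (p i))
/-- The star map `a* := Σ_p a(p)·p⁻¹` on the group ring `ℝ[S_r]`. -/
noncomputable def astar {r : ℕ} (a : MonoidAlgebra ℝ (Equiv.Perm (Fin r))) :
    MonoidAlgebra ℝ (Equiv.Perm (Fin r)) :=
  MonoidAlgebra.ofCoeff (Finsupp.equivFunOnFinite.symm (fun p => a.coeff p⁻¹))
/-- The Young symmetrizer `y_t = Σ_{p∈H_t} Σ_{q∈V_t} sign(q)·(p∘q)` of the tableau with
rows `{1,3}`, `{2,4}` (indices `0`-based in `Fin 4`):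
`H_t = {id, (1 3), (2 4), (1 3)(2 4)}`, `V_t = {id, (1 2), (3 4), (1 2)(3 4)}`. -/
noncomputable def yt : MonoidAlgebra ℝ (Equiv.Perm (Fin 4)) :=
  (MonoidAlgebra.single 1 1 + MonoidAlgebra.single (Equiv.swap 0 2) 1 +
     MonoidAlgebra.single (Equiv.swap 1 3) 1 +
     MonoidAlgebra.single (Equiv.swap 0 2 * Equiv.swap 1 3) 1) *
  (MonoidAlgebra.single 1 1 - MonoidAlgebra.single (Equiv.swap 0 1) 1 -
     MonoidAlgebra.single (Equiv.swap 2 3) 1 +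
     MonoidAlgebra.single (Equiv.swap 0 1 * Equiv.swap 2 3) 1)
/-- `ξ_ν := (1/3)(id + ν·(2 3) + (1−ν)·(1 2) − ν·(1 2 3) + (ν−1)·(1 3 2) − (1 3)) ∈ ℝ[S_3]`,
with `0`-based indices in `Fin 3`; `finRotate 3` is the cycle `(1 2 3)`. -/
noncomputable def xi (ν : ℝ) : MonoidAlgebra ℝ (Equiv.Perm (Fin 3)) :=
  (1/3 : ℝ) • (MonoidAlgebra.single 1 1 + MonoidAlgebra.single (Equiv.swap 1 2) ν +
    MonoidAlgebra.single (Equiv.swap 0 1) (1 - ν) - MonoidAlgebra.single (finRotate 3) ν +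
    MonoidAlgebra.single (finRotate 3)⁻¹ (ν - 1) - MonoidAlgebra.single (Equiv.swap 0 2) 1)

section helpers
variable {V : Type} [AddCommGroup V] [Module ℝ V] {r : ℕ}

lemma ma_add_apply (x y : MonoidAlgebra ℝ (Equiv.Perm (Fin r))) (p) :
    (x + y).coeff p = x.coeff p + y.coeff p := rfl
lemma ma_sub_apply (x y : MonoidAlgebra ℝ (Equiv.Perm (Fin r))) (p) :
    (x - y).coeff p = x.coeff p - y.coeff p := rfl
lemma ma_smul_apply (c : ℝ) (x : MonoidAlgebra ℝ (Equiv.Perm (Fin r))) (p) :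
    (c • x).coeff p = c * x.coeff p := rfl
lemma ma_single_apply (p q : Equiv.Perm (Fin r)) (c : ℝ) :
    (MonoidAlgebra.single p c).coeff q = if q = p then c else 0 := by
  rw [MonoidAlgebra.coeff_single, Finsupp.single_apply]; exact if_congr eq_comm rfl rfl

lemma fact_add (x y : MonoidAlgebra ℝ (Equiv.Perm (Fin r))) (T : (Fin r → V) → ℝ) (v) :
    fact (x + y) T v = fact x T v + fact y T v := by
  simp [fact, add_mul, ma_add_apply, Finset.sum_add_distrib]
lemma fact_sub (x y : MonoidAlgebra ℝ (Equiv.Perm (Fin r))) (T : (Fin r → V) → ℝ) (v) :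
    fact (x - y) T v = fact x T v - fact y T v := by
  simp [fact, sub_mul, ma_sub_apply, Finset.sum_sub_distrib]
lemma fact_smul (c : ℝ) (x : MonoidAlgebra ℝ (Equiv.Perm (Fin r))) (T : (Fin r → V) → ℝ) (v) :
    fact (c • x) T v = c * fact x T v := by
  simp [fact, ma_smul_apply, mul_assoc, Finset.mul_sum]
lemma fact_single (p : Equiv.Perm (Fin r)) (c : ℝ) (T : (Fin r → V) → ℝ) (v) :
    fact (MonoidAlgebra.single p c) T v = c * T (fun i => v (p i)) := by
  simp [fact, ma_single_apply, Finsupp.single_apply, ite_mul]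

lemma astar_apply (a : MonoidAlgebra ℝ (Equiv.Perm (Fin r))) (p) : (astar a).coeff p = a.coeff p⁻¹ := rfl
lemma astar_add (x y : MonoidAlgebra ℝ (Equiv.Perm (Fin r))) :
    astar (x + y) = astar x + astar y := by
  ext q; rw [astar_apply, ma_add_apply, ma_add_apply, astar_apply, astar_apply]
lemma astar_sub (x y : MonoidAlgebra ℝ (Equiv.Perm (Fin r))) :
    astar (x - y) = astar x - astar y := by
  ext q; rw [astar_apply, ma_sub_apply, ma_sub_apply, astar_apply, astar_apply]
lemma astar_single (p : Equiv.Perm (Fin r)) (c : ℝ) :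
    astar (MonoidAlgebra.single p c) = MonoidAlgebra.single p⁻¹ c := by
  ext q
  rw [astar_apply, ma_single_apply, ma_single_apply]
  exact if_congr inv_eq_iff_eq_inv rfl rfl

lemma gact_apply (a : MonoidAlgebra ℝ (Equiv.Perm (Fin r)))
    (T : MultilinearMap ℝ (fun _ : Fin r => V) ℝ) (v : Fin r → V) :
    gact a T v = fact a (fun x => T x) v := by
  simp [gact, fact, MultilinearMap.sum_apply, smul_eq_mul]

end helpers

lemma yt_eq : yt =
    MonoidAlgebra.single 1 1 + MonoidAlgebra.single (Equiv.swap 0 2) 1 +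
        MonoidAlgebra.single (Equiv.swap 1 3) 1 +
        MonoidAlgebra.single (Equiv.swap 0 2 * Equiv.swap 1 3) 1 -
      (MonoidAlgebra.single (Equiv.swap 0 1) 1 +
          MonoidAlgebra.single (Equiv.swap 0 2 * Equiv.swap 0 1) 1 +
          MonoidAlgebra.single (Equiv.swap 1 3 * Equiv.swap 0 1) 1 +
        MonoidAlgebra.single (Equiv.swap 0 2 * Equiv.swap 1 3 * Equiv.swap 0 1) 1) -
      (MonoidAlgebra.single (Equiv.swap 2 3) 1 +
          MonoidAlgebra.single (Equiv.swap 0 2 * Equiv.swap 2 3) 1 +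
          MonoidAlgebra.single (Equiv.swap 1 3 * Equiv.swap 2 3) 1 +
        MonoidAlgebra.single (Equiv.swap 0 2 * Equiv.swap 1 3 * Equiv.swap 2 3) 1) +
      (MonoidAlgebra.single (Equiv.swap 0 1 * Equiv.swap 2 3) 1 +
          MonoidAlgebra.single (Equiv.swap 0 2 * (Equiv.swap 0 1 * Equiv.swap 2 3)) 1 +
          MonoidAlgebra.single (Equiv.swap 1 3 * (Equiv.swap 0 1 * Equiv.swap 2 3)) 1 +
        MonoidAlgebra.single (Equiv.swap 0 2 * Equiv.swap 1 3 * (Equiv.swap 0 1 * Equiv.swap 2 3)) 1) := by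
  rw [yt]
  simp only [mul_add, mul_sub, add_mul, sub_mul, MonoidAlgebra.single_mul_single,
    one_mul, mul_one]


/-- If `U : V³ → ℝ` is trilinear with `ξ_{1/2}·U = U`, then
`y_t*(U⊗w) = 0` for every linear functional `w`. -/
theorem stmt_13 (V : Type) [AddCommGroup V] [Module ℝ V] [FiniteDimensional ℝ V]
    (U : MultilinearMap ℝ (fun _ : Fin 3 => V) ℝ) (hU : gact (xi (1/2)) U = U)
    (w : V →ₗ[ℝ] ℝ) :
    ∀ v : Fin 4 → V,
      fact (astar yt) (fun v' => U ![v' 0, v' 1, v' 2] * w (v' 3)) v = 0 := by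
  intro v
  -- the key trilinear relation from hU
  have key : ∀ x y z : V, 4*U ![x,y,z] - U ![x,z,y] - U ![y,x,z] + U ![y,z,x]
      + U ![z,x,y] + 2*U ![z,y,x] = 0 := by
    intro x y z
    have h := DFunLike.congr_fun hU ![x,y,z]
    rw [xi] at h
    rw [gact_apply, fact_smul, fact_sub, fact_add, fact_sub, fact_add, fact_add,
      fact_single, fact_single, fact_single, fact_single, fact_single, fact_single] at h
    have a1 : (fun i => (![x,y,z] : Fin 3 → V) ((1 : Equiv.Perm (Fin 3)) i)) = ![x,y,z] := by
      funext i
      have h' : ∀ j : Fin 3, (1 : Equiv.Perm (Fin 3)) j = ![0,1,2] j := by decide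
      rw [h']; fin_cases i <;> simp
    have a2 : (fun i => (![x,y,z] : Fin 3 → V) ((Equiv.swap 1 2 : Equiv.Perm (Fin 3)) i)) = ![x,z,y] := by
      funext i
      have h' : ∀ j : Fin 3, (Equiv.swap 1 2 : Equiv.Perm (Fin 3)) j = ![0,2,1] j := by decide
      rw [h']; fin_cases i <;> simp
    have a3 : (fun i => (![x,y,z] : Fin 3 → V) ((Equiv.swap 0 1 : Equiv.Perm (Fin 3)) i)) = ![y,x,z] := by
      funext i
      have h' : ∀ j : Fin 3, (Equiv.swap 0 1 : Equiv.Perm (Fin 3)) j = ![1,0,2] j := by decide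
      rw [h']; fin_cases i <;> simp
    have a4 : (fun i => (![x,y,z] : Fin 3 → V) ((finRotate 3) i)) = ![y,z,x] := by
      funext i
      have h' : ∀ j : Fin 3, (finRotate 3) j = ![1,2,0] j := by decide
      rw [h']; fin_cases i <;> simp
    have a5 : (fun i => (![x,y,z] : Fin 3 → V) ((finRotate 3)⁻¹ i)) = ![z,x,y] := by
      funext i
      have h' : ∀ j : Fin 3, (finRotate 3)⁻¹ j = ![2,0,1] j := by decide
      rw [h']; fin_cases i <;> simp
    have a6 : (fun i => (![x,y,z] : Fin 3 → V) ((Equiv.swap 0 2 : Equiv.Perm (Fin 3)) i)) = ![z,y,x] := by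
      funext i
      have h' : ∀ j : Fin 3, (Equiv.swap 0 2 : Equiv.Perm (Fin 3)) j = ![2,1,0] j := by decide
      rw [h']; fin_cases i <;> simp
    rw [a1, a2, a3, a4, a5, a6] at h
    linear_combination (-6 : ℝ) * h
  rw [yt_eq]
  simp only [astar_add, astar_sub, astar_single]
  simp only [fact_add, fact_sub, fact_single]
  have e1 : ∀ i : Fin 4, ((1 : Equiv.Perm (Fin 4))⁻¹) i = ![0,1,2,3] i := by decide
  have e2 : ∀ i : Fin 4, ((Equiv.swap 0 2 : Equiv.Perm (Fin 4))⁻¹) i = ![2,1,0,3] i := by decide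
  have e3 : ∀ i : Fin 4, ((Equiv.swap 1 3 : Equiv.Perm (Fin 4))⁻¹) i = ![0,3,2,1] i := by decide
  have e4 : ∀ i : Fin 4, ((Equiv.swap 0 2 * Equiv.swap 1 3 : Equiv.Perm (Fin 4))⁻¹) i = ![2,3,0,1] i := by decide
  have e5 : ∀ i : Fin 4, ((Equiv.swap 0 1 : Equiv.Perm (Fin 4))⁻¹) i = ![1,0,2,3] i := by decide
  have e6 : ∀ i : Fin 4, ((Equiv.swap 0 2 * Equiv.swap 0 1 : Equiv.Perm (Fin 4))⁻¹) i = ![2,0,1,3] i := by decide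
  have e7 : ∀ i : Fin 4, ((Equiv.swap 1 3 * Equiv.swap 0 1 : Equiv.Perm (Fin 4))⁻¹) i = ![1,3,2,0] i := by decide
  have e8 : ∀ i : Fin 4, ((Equiv.swap 0 2 * Equiv.swap 1 3 * Equiv.swap 0 1 : Equiv.Perm (Fin 4))⁻¹) i = ![2,3,1,0] i := by decide
  have e9 : ∀ i : Fin 4, ((Equiv.swap 2 3 : Equiv.Perm (Fin 4))⁻¹) i = ![0,1,3,2] i := by decide
  have e10 : ∀ i : Fin 4, ((Equiv.swap 0 2 * Equiv.swap 2 3 : Equiv.Perm (Fin 4))⁻¹) i = ![3,1,0,2] i := by decide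
  have e11 : ∀ i : Fin 4, ((Equiv.swap 1 3 * Equiv.swap 2 3 : Equiv.Perm (Fin 4))⁻¹) i = ![0,2,3,1] i := by decide
  have e12 : ∀ i : Fin 4, ((Equiv.swap 0 2 * Equiv.swap 1 3 * Equiv.swap 2 3 : Equiv.Perm (Fin 4))⁻¹) i = ![3,2,0,1] i := by decide
  have e13 : ∀ i : Fin 4, ((Equiv.swap 0 1 * Equiv.swap 2 3 : Equiv.Perm (Fin 4))⁻¹) i = ![1,0,3,2] i := by decide
  have e14 : ∀ i : Fin 4, ((Equiv.swap 0 2 * (Equiv.swap 0 1 * Equiv.swap 2 3) : Equiv.Perm (Fin 4))⁻¹) i = ![3,0,1,2] i := by decide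
  have e15 : ∀ i : Fin 4, ((Equiv.swap 1 3 * (Equiv.swap 0 1 * Equiv.swap 2 3) : Equiv.Perm (Fin 4))⁻¹) i = ![1,2,3,0] i := by decide
  have e16 : ∀ i : Fin 4, ((Equiv.swap 0 2 * Equiv.swap 1 3 * (Equiv.swap 0 1 * Equiv.swap 2 3) : Equiv.Perm (Fin 4))⁻¹) i = ![3,2,1,0] i := by decide
  simp only [e1, e2, e3, e4, e5, e6, e7, e8, e9, e10, e11, e12, e13, e14, e15, e16]
  simp only [Matrix.cons_val_zero, Matrix.cons_val_one, Matrix.head_cons,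
    Matrix.cons_val_two, Matrix.tail_cons, Matrix.cons_val_three, Matrix.cons_val_fin_one,
    Matrix.cons_val', Matrix.cons_val_succ, one_mul]
  linear_combination
    (w (v 3)/3) * (key (v 0) (v 1) (v 2) + key (v 0) (v 2) (v 1)
      - key (v 1) (v 0) (v 2) - key (v 1) (v 2) (v 0))
    - (w (v 1)/3) * (key (v 0) (v 2) (v 3) - key (v 2) (v 3) (v 0))
    - (w (v 2)/3) * (key (v 0) (v 1) (v 3) + key (v 0) (v 3) (v 1)
      - key (v 1) (v 0) (v 3) - key (v 1) (v 3) (v 0))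
    + (w (v 0)/3) * (key (v 1) (v 2) (v 3) - key (v 2) (v 3) (v 1))
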